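/- (Corollary 1, exponential convergence of the static-gain distributed algorithm.) Let x : ℝ → (Fin N → X) satisfy, for every t ≥ 0, HasDerivAt x (−𝒜 (x t)) t. Then there exists α > 0, depending only on ε, ι, λ₂, κ, and N, such that for all t ≥ 0, ‖x t − ψ̃‖ ≤ Real.exp (−α * t) * ‖x 0 − ψ̃‖ (with the L² product norm on Fin N → X); hence all players' estimated strategies converge exponentially to the Nash equilibrium x*. -/

import Mathlib

noncomputable section

open Filter

/-- `gradi J i x` is the gradient, at `x i`, of the map `y ↦ J i (Function.update x i y)`,
i.e. player `i`'s partial gradient of its own cost with respect to its own action. -/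
def gradi {N : ℕ} {d : Fin N → ℕ}
    (J : ∀ _ : Fin N, (PiLp 2 fun i => EuclideanSpace ℝ (Fin (d i))) → ℝ)
    (i : Fin N) (x : PiLp 2 fun i => EuclideanSpace ℝ (Fin (d i))) :
    EuclideanSpace ℝ (Fin (d i)) :=
  gradient (fun y => J i (WithLp.toLp 2 (Function.update x i y))) (x i)

/-- The pseudo-gradient `F`. -/
def Fmap {N : ℕ} {d : Fin N → ℕ}
    (J : ∀ _ : Fin N, (PiLp 2 fun i => EuclideanSpace ℝ (Fin (d i))) → ℝ)
    (x : PiLp 2 fun i => EuclideanSpace ℝ (Fin (d i))) :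
    PiLp 2 fun i => EuclideanSpace ℝ (Fin (d i)) :=
  WithLp.toLp 2 fun i => gradi J i x

/-- The extended pseudo-gradient `F̃`. -/
def Ftil {N : ℕ} {d : Fin N → ℕ}
    (J : ∀ _ : Fin N, (PiLp 2 fun i => EuclideanSpace ℝ (Fin (d i))) → ℝ)
    (ψ : Fin N → PiLp 2 fun i => EuclideanSpace ℝ (Fin (d i))) :
    PiLp 2 fun i => EuclideanSpace ℝ (Fin (d i)) :=
  WithLp.toLp 2 fun i => gradi J i (ψ i)

/-- The augmented game map `𝒜`. -/
def Amap {N : ℕ} {d : Fin N → ℕ}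
    (J : ∀ _ : Fin N, (PiLp 2 fun i => EuclideanSpace ℝ (Fin (d i))) → ℝ)
    (G : SimpleGraph (Fin N)) [DecidableRel G.Adj] (κ : ℝ)
    (ψ : PiLp 2 fun _ : Fin N => PiLp 2 fun i => EuclideanSpace ℝ (Fin (d i))) :
    PiLp 2 fun _ : Fin N => PiLp 2 fun i => EuclideanSpace ℝ (Fin (d i)) :=
  WithLp.toLp 2 fun i => (show PiLp 2 (fun i => EuclideanSpace ℝ (Fin (d i))) from
      WithLp.toLp 2 (Function.update (0 : PiLp 2 fun i => EuclideanSpace ℝ (Fin (d i))) i (Ftil J ψ i)))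
    + κ • ∑ j, SimpleGraph.lapMatrix ℝ G i j • ψ j

set_option maxHeartbeats 1000000

lemma quad_aux (ε ι c : ℝ) (N : ℕ) (hN : 1 ≤ N) (hε : 0 < ε) (hι : 0 < ι)
    (hc : ι^2 < ε * c) (a b : ℝ) :
    (ε*c - ι^2)/((N:ℝ)*(ε+c)) * ((N:ℝ) * a^2 + b^2) ≤ ε*a^2 - 2*ι*a*b + c*b^2 := by
  have hc0 : 0 < c := by nlinarith [sq_nonneg ι]
  have hec : 0 < ε + c := by linarith
  have hN0 : (0:ℝ) < N := by exact_mod_cast Nat.lt_of_lt_of_le Nat.zero_lt_one hN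
  have hN1 : (1:ℝ) ≤ N := by exact_mod_cast hN
  have ht : 0 < ε*c - ι^2 := by linarith
  have key : (ε^2+ι^2) * ((ε*a^2-2*ι*a*b+c*b^2)*(ε+c) - (ε*c-ι^2)*(a^2+b^2))
      = ((ε^2+ι^2)*a - (ε+c)*ι*b)^2 + ((ε*c-ι^2)*b)^2 := by ring
  have step1 : (ε*c - ι^2)/(ε+c) * (a^2 + b^2) ≤ ε*a^2 - 2*ι*a*b + c*b^2 := by
    rw [div_mul_eq_mul_div, div_le_iff₀ hec]
    nlinarith [key, mul_pos hε hε, mul_pos hι hι,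
      sq_nonneg ((ε^2+ι^2)*a - (ε+c)*ι*b), sq_nonneg ((ε*c-ι^2)*b)]
  have step2 : (ε*c - ι^2)/((N:ℝ)*(ε+c)) * ((N:ℝ)*a^2 + b^2) ≤ (ε*c-ι^2)/(ε+c) * (a^2+b^2) := by
    rw [div_mul_eq_mul_div, div_mul_eq_mul_div, div_le_div_iff₀ (by positivity) hec]
    nlinarith [mul_nonneg (mul_nonneg ht.le hec.le) (sq_nonneg b), sq_nonneg b,
      mul_le_mul_of_nonneg_left hN1 (mul_nonneg (mul_nonneg ht.le hec.le) (sq_nonneg b))]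
  linarith

lemma sqrt_trick {a b : ℝ} (hb : 0 ≤ b) (h : a^2 ≤ b^2) (ha : 0 ≤ a) : a ≤ b := by
  nlinarith

abbrev Xsp (N : ℕ) (d : Fin N → ℕ) : Type := PiLp 2 fun i => EuclideanSpace ℝ (Fin (d i))
abbrev Ysp (N : ℕ) (d : Fin N → ℕ) : Type := PiLp 2 fun _ : Fin N => Xsp N d

set_option maxHeartbeats 2000000 in
lemma key_ineq
    {N : ℕ} (hN : 1 ≤ N) {d : Fin N → ℕ}
    (J : ∀ _ : Fin N, Xsp N d → ℝ)
    (G : SimpleGraph (Fin N)) [DecidableRel G.Adj]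
    (ε ι lam₂ κ : ℝ) (hε : 0 < ε) (hι : 0 < ι) (hlam₂ : 0 < lam₂)
    (hmono : ∀ x y : Xsp N d,
      (inner ℝ (x - y) (Fmap J x - Fmap J y) : ℝ) ≥ ε * ‖x - y‖ ^ 2)
    (hFLip : ∀ x y : Xsp N d, ‖Fmap J x - Fmap J y‖ ≤ ι * ‖x - y‖)
    (hFtilLip : ∀ ψ φ : Ysp N d, ‖Ftil J ψ - Ftil J φ‖ ≤ ι * ‖ψ - φ‖)
    (hlap : ∀ v : Fin N → Xsp N d,
      ∑ i, v i = 0 →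
      ∑ i, ∑ j, SimpleGraph.lapMatrix ℝ G i j * (inner ℝ (v i) (v j) : ℝ) ≥ lam₂ * ∑ i, ‖v i‖ ^ 2)
    (xstar : Xsp N d) (hxstar : Fmap J xstar = 0)
    (hκgain : κ > (ι ^ 2 / ε + ι) / lam₂)
    (ψt : Ysp N d) (hψt : ψt = WithLp.toLp 2 fun _ => xstar) :
    ∃ α : ℝ, 0 < α ∧ ∀ ψ : Ysp N d,
      α * ‖ψ - ψt‖^2 ≤ (inner ℝ (ψ - ψt) (Amap J G κ ψ) : ℝ) := by
  classical
  set c := κ * lam₂ - ι with hcdef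
  have hκlam : ι ^ 2 / ε + ι < κ * lam₂ := (div_lt_iff₀ hlam₂).mp hκgain
  have hιε : 0 < ι^2/ε := by positivity
  have hc0 : 0 < c := by simp only [hcdef]; linarith
  have hκ : 0 < κ := by
    have h0 : 0 < κ * lam₂ := by linarith
    nlinarith
  have hc : ι^2 < ε * c := by
    have h1 : ι^2/ε < c := by simp only [hcdef]; linarith
    have := (div_lt_iff₀ hε).mp h1
    linarith
  have hNR : (0:ℝ) < N := by exact_mod_cast Nat.lt_of_lt_of_le Nat.zero_lt_one hN
  refine ⟨(ε*c - ι^2)/((N:ℝ)*(ε+c)), div_pos (by linarith) (by positivity), ?_⟩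
  intro ψ
  set L := SimpleGraph.lapMatrix ℝ G with hL
  have hrow : ∀ i, ∑ j, L i j = 0 := by
    intro i
    have h := congrFun (SimpleGraph.lapMatrix_mulVec_const_eq_zero (R := ℝ) G) i
    simpa [Matrix.mulVec, dotProduct] using h
  have hsym : ∀ i j, L i j = L j i := by
    intro i j
    exact (SimpleGraph.isSymm_lapMatrix ℝ G).apply j i
  have hcol : ∀ j, ∑ i, L i j = 0 := by
    intro j
    simp_rw [fun i => hsym i j]
    exact hrow j
  -- decomposition
  have hNne : (N:ℝ) ≠ 0 := ne_of_gt hNR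
  set Sv : Xsp N d := ∑ j, (ψ j - xstar) with hSv
  set m : Xsp N d := (N:ℝ)⁻¹ • Sv with hm
  set w : Fin N → Xsp N d := fun i => ψ i - xstar - m with hw
  have hsumw : ∑ i, w i = 0 := by
    calc ∑ i, w i = ∑ i, ((ψ i - xstar) - m) := rfl
    _ = (∑ i, (ψ i - xstar)) - ∑ _i : Fin N, m := Finset.sum_sub_distrib _ _
    _ = Sv - (N:ℝ) • m := by
        rw [Finset.sum_const, Finset.card_univ, Fintype.card_fin,
          ← Nat.cast_smul_eq_nsmul ℝ, ← hSv]
    _ = 0 := by rw [hm, smul_smul, mul_inv_cancel₀ hNne, one_smul, sub_self]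
  have hvi : ∀ i, ψ i - xstar = m + w i := by
    intro i
    show ψ i - xstar = m + (ψ i - xstar - m)
    abel
  set W : Ysp N d := WithLp.toLp 2 w with hW
  set a := ‖m‖ with hadef
  set b := ‖W‖ with hbdef
  have ha0 : (0:ℝ) ≤ a := norm_nonneg _
  have hb0 : (0:ℝ) ≤ b := norm_nonneg _
  have hbsq : b^2 = ∑ i, ‖w i‖^2 := by
    rw [hbdef, PiLp.norm_sq_eq_of_L2]
  -- inner with a block update
  have hupdate : ∀ (u : Xsp N d) (i : Fin N) (g : EuclideanSpace ℝ (Fin (d i))),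
      (inner ℝ u (show Xsp N d from WithLp.toLp 2 (Function.update (0 : Xsp N d) i g)) : ℝ)
        = (inner ℝ (u i) g : ℝ) := by
    intro u i g
    rw [PiLp.inner_apply]
    rw [Finset.sum_eq_single i]
    · simp
    · intro k _ hk
      have h0 : (show Xsp N d from WithLp.toLp 2 (Function.update (0 : Xsp N d) i g)) k = 0 :=
        Function.update_of_ne hk _ _
      rw [h0, inner_zero_right]
    · intro h; exact absurd (Finset.mem_univ i) h
  -- expand the inner product
  have expand1 : ∀ i, (inner ℝ ((ψ - ψt) i) (Amap J G κ ψ i) : ℝ)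
      = (inner ℝ ((ψ i - xstar) i) (gradi J i (ψ i)) : ℝ)
        + κ * ∑ j, L i j * (inner ℝ (ψ i - xstar) (ψ j) : ℝ) := by
    intro i
    have h1 : (ψ - ψt) i = ψ i - xstar := by rw [hψt]; rfl
    have h2 : Amap J G κ ψ i = (show Xsp N d from WithLp.toLp 2 (Function.update (0 : Xsp N d) i (Ftil J ψ i)))
        + κ • ∑ j, L i j • ψ j := rfl
    rw [h1, h2, inner_add_right, hupdate, real_inner_smul_right, inner_sum]
    simp_rw [real_inner_smul_right]
    rfl
  have expand : (inner ℝ (ψ - ψt) (Amap J G κ ψ) : ℝ)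
      = (∑ i, (inner ℝ ((ψ i - xstar) i) (gradi J i (ψ i)) : ℝ))
        + κ * ∑ i, ∑ j, L i j * (inner ℝ (ψ i - xstar) (ψ j) : ℝ) := by
    rw [PiLp.inner_apply, Finset.sum_congr rfl (fun i _ => expand1 i),
      Finset.sum_add_distrib, ← Finset.mul_sum]
  -- the Laplacian term
  have hSeq : ∑ i, ∑ j, L i j * (inner ℝ (ψ i - xstar) (ψ j) : ℝ)
      = ∑ i, ∑ j, L i j * (inner ℝ (w i) (w j) : ℝ) := by
    have hψj : ∀ j, ψ j = w j + (xstar + m) := by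
      intro j
      show ψ j = (ψ j - xstar - m) + (xstar + m)
      abel
    have step1 : ∀ i, ∑ j, L i j * (inner ℝ (ψ i - xstar) (ψ j) : ℝ)
        = ∑ j, L i j * (inner ℝ (ψ i - xstar) (w j) : ℝ) := by
      intro i
      calc ∑ j, L i j * (inner ℝ (ψ i - xstar) (ψ j) : ℝ)
          = ∑ j, (L i j * (inner ℝ (ψ i - xstar) (w j) : ℝ)
              + L i j * (inner ℝ (ψ i - xstar) (xstar + m) : ℝ)) := by
            refine Finset.sum_congr rfl fun j _ => ?_
            rw [hψj j, inner_add_right, mul_add]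
        _ = (∑ j, L i j * (inner ℝ (ψ i - xstar) (w j) : ℝ))
              + (∑ j, L i j) * (inner ℝ (ψ i - xstar) (xstar + m) : ℝ) := by
            rw [Finset.sum_add_distrib, Finset.sum_mul]
        _ = ∑ j, L i j * (inner ℝ (ψ i - xstar) (w j) : ℝ) := by
            rw [hrow i, zero_mul, add_zero]
    calc ∑ i, ∑ j, L i j * (inner ℝ (ψ i - xstar) (ψ j) : ℝ)
        = ∑ i, ∑ j, L i j * (inner ℝ (ψ i - xstar) (w j) : ℝ) :=
          Finset.sum_congr rfl fun i _ => step1 i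
      _ = ∑ i, ∑ j, (L i j * (inner ℝ (w i) (w j) : ℝ) + L i j * (inner ℝ m (w j) : ℝ)) := by
          refine Finset.sum_congr rfl fun i _ => Finset.sum_congr rfl fun j _ => ?_
          rw [hvi i, inner_add_left, mul_add, add_comm (L i j * (inner ℝ m (w j) : ℝ))]
      _ = (∑ i, ∑ j, L i j * (inner ℝ (w i) (w j) : ℝ))
            + ∑ j, (∑ i, L i j) * (inner ℝ m (w j) : ℝ) := by
          simp_rw [Finset.sum_add_distrib]
          rw [Finset.sum_comm (f := fun i j => L i j * (inner ℝ m (w j) : ℝ))]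
          simp_rw [← Finset.sum_mul]
      _ = ∑ i, ∑ j, L i j * (inner ℝ (w i) (w j) : ℝ) := by
          have h5 : ∀ j, (∑ i, L i j) * (inner ℝ m (w j) : ℝ) = 0 := by
            intro j; rw [hcol j, zero_mul]
          rw [Finset.sum_congr rfl fun j _ => h5 j, Finset.sum_const, smul_zero, add_zero]
  have hSineq : lam₂ * b^2 ≤ ∑ i, ∑ j, L i j * (inner ℝ (ψ i - xstar) (ψ j) : ℝ) := by
    rw [hSeq, hbsq]
    exact hlap w hsumw
  -- the gradient term
  set s : Xsp N d := xstar + m with hs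
  have hsm : s - xstar = m := by rw [hs]; abel
  set Dv : Xsp N d := WithLp.toLp 2 (fun k => (ψ k - xstar) k : ∀ k, EuclideanSpace ℝ (Fin (d k))) with hDv
  set Dw : Xsp N d := WithLp.toLp 2 (fun k => w k k : ∀ k, EuclideanSpace ℝ (Fin (d k))) with hDw
  set E : Xsp N d := Ftil J ψ - Ftil J (fun _ => s) with hE
  have hT1 : (∑ i, (inner ℝ ((ψ i - xstar) i) (gradi J i (ψ i)) : ℝ))
      = (inner ℝ Dv E : ℝ) + (inner ℝ Dv (Fmap J s) : ℝ) := by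
    have h1 : (∑ i, (inner ℝ ((ψ i - xstar) i) (gradi J i (ψ i)) : ℝ))
        = (inner ℝ Dv (Ftil J ψ) : ℝ) := (PiLp.inner_apply Dv (Ftil J ψ)).symm
    have h2 : Ftil J ψ = E + Fmap J s := by
      rw [hE, show Ftil J (fun _ => s) = Fmap J s from rfl]
      abel
    rw [h1, h2, inner_add_right]
  have hDvEq : Dv = m + Dw := by
    refine PiLp.ext (fun k => ?_)
    show (ψ k - xstar) k = (m + Dw) k
    rw [hvi k]
    rfl
  have hDw_b : ‖Dw‖ ≤ b := by
    have h2 : ‖Dw‖^2 ≤ b^2 := by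
      rw [hbsq, PiLp.norm_sq_eq_of_L2]
      refine Finset.sum_le_sum fun k _ => ?_
      calc ‖Dw k‖^2 = ‖w k k‖^2 := rfl
        _ ≤ ∑ j, ‖w k j‖^2 :=
            Finset.single_le_sum (fun j _ => sq_nonneg ‖w k j‖) (Finset.mem_univ k)
        _ = ‖w k‖^2 := (PiLp.norm_sq_eq_of_L2 _ (w k)).symm
    exact sqrt_trick hb0 h2 (norm_nonneg _)
  have hDv_ab : ‖Dv‖ ≤ a + b := by
    rw [hDvEq]
    exact le_trans (norm_add_le _ _) (add_le_add le_rfl hDw_b)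
  have hFs : ‖Fmap J s‖ ≤ ι * a := by
    have h := hFLip s xstar
    rwa [hxstar, sub_zero, hsm] at h
  have hEb : ‖E‖ ≤ ι * b := by
    have h := hFtilLip ψ (WithLp.toLp 2 fun _ => s)
    have hps : ψ - (show Ysp N d from WithLp.toLp 2 fun _ => s) = W := by
      refine PiLp.ext (fun i => ?_)
      show ψ i - s = w i
      rw [hs]
      show ψ i - (xstar + m) = ψ i - xstar - m
      abel
    rw [hps] at h
    exact h
  have hmid : ε * a^2 ≤ (inner ℝ m (Fmap J s) : ℝ) := by
    have h := hmono s xstar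
    rw [hxstar, sub_zero, hsm] at h
    exact h
  have h2' : -(ι*a*b) ≤ (inner ℝ Dw (Fmap J s) : ℝ) := by
    have hm1 : ‖Dw‖ * ‖Fmap J s‖ ≤ b * (ι*a) :=
      mul_le_mul hDw_b hFs (norm_nonneg _) hb0
    have hm2 := (abs_le.mp (abs_real_inner_le_norm Dw (Fmap J s))).1
    have h4 : -(ι*a*b) = -(b*(ι*a)) := by ring
    rw [h4]; linarith
  have h3' : -((a+b)*(ι*b)) ≤ (inner ℝ Dv E : ℝ) := by
    have hm1 : ‖Dv‖ * ‖E‖ ≤ (a+b) * (ι*b) :=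
      mul_le_mul hDv_ab hEb (norm_nonneg _) (by linarith)
    have hm2 := (abs_le.mp (abs_real_inner_le_norm Dv E)).1
    linarith
  -- the norm identity
  have hnorm : ‖ψ - ψt‖^2 = (N:ℝ) * a^2 + b^2 := by
    rw [PiLp.norm_sq_eq_of_L2]
    have hterm : ∀ i, ‖(ψ - ψt) i‖^2 = a^2 + 2*(inner ℝ m (w i) : ℝ) + ‖w i‖^2 := by
      intro i
      have h1 : (ψ - ψt) i = m + w i := by rw [hψt]; exact hvi i
      rw [h1, norm_add_sq_real]
    rw [Finset.sum_congr rfl fun i _ => hterm i]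
    rw [Finset.sum_add_distrib, Finset.sum_add_distrib]
    have hz : ∑ i, 2*(inner ℝ m (w i) : ℝ) = 0 := by
      rw [← Finset.mul_sum, ← inner_sum, hsumw, inner_zero_right, mul_zero]
    rw [hz, add_zero, ← hbsq, Finset.sum_const, Finset.card_univ, Fintype.card_fin,
      nsmul_eq_mul]
  -- put everything together
  rw [hnorm, expand, hT1]
  have hquad := quad_aux ε ι c N hN hε hι hc a b
  have hκS : κ * (lam₂ * b^2) ≤ κ * ∑ i, ∑ j, L i j * (inner ℝ (ψ i - xstar) (ψ j) : ℝ) :=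
    mul_le_mul_of_nonneg_left hSineq hκ.le
  have hcb : c*b^2 = κ*(lam₂*b^2) - ι*b^2 := by rw [hcdef]; ring
  have hsplit : (inner ℝ Dv (Fmap J s) : ℝ)
      = (inner ℝ m (Fmap J s) : ℝ) + (inner ℝ Dw (Fmap J s) : ℝ) := by
    rw [hDvEq, inner_add_left]
  linarith [hquad, hκS, hmid, h2', h3', hcb, hsplit]


/-- **Corollary 1**: the static-gain distributed algorithm drives all players' estimates
exponentially to the consensus point at the Nash equilibrium. -/
theorem static_gain_exponential_convergence
    {N : ℕ} (hN : 1 ≤ N) {d : Fin N → ℕ}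
    (J : ∀ _ : Fin N, (PiLp 2 fun i => EuclideanSpace ℝ (Fin (d i))) → ℝ)
    (hJ : ∀ i, Differentiable ℝ (J i))
    (G : SimpleGraph (Fin N)) [DecidableRel G.Adj] (hG : G.Connected)
    (ε ι lam₂ κ : ℝ) (hε : 0 < ε) (hι : 0 < ι) (hlam₂ : 0 < lam₂)
    (hmono : ∀ x y : PiLp 2 fun i => EuclideanSpace ℝ (Fin (d i)),
      (inner ℝ (x - y) (Fmap J x - Fmap J y) : ℝ) ≥ ε * ‖x - y‖ ^ 2)
    (hFLip : ∀ x y : PiLp 2 fun i => EuclideanSpace ℝ (Fin (d i)),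
      ‖Fmap J x - Fmap J y‖ ≤ ι * ‖x - y‖)
    (hFtilLip : ∀ ψ φ : PiLp 2 fun _ : Fin N => PiLp 2 fun i => EuclideanSpace ℝ (Fin (d i)),
      ‖Ftil J ψ - Ftil J φ‖ ≤ ι * ‖ψ - φ‖)
    (hlap : ∀ v : Fin N → PiLp 2 fun i => EuclideanSpace ℝ (Fin (d i)),
      ∑ i, v i = 0 →
      ∑ i, ∑ j, SimpleGraph.lapMatrix ℝ G i j * (inner ℝ (v i) (v j) : ℝ) ≥ lam₂ * ∑ i, ‖v i‖ ^ 2)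
    (xstar : PiLp 2 fun i => EuclideanSpace ℝ (Fin (d i))) (hxstar : Fmap J xstar = 0)
    (hκgain : κ > (ι ^ 2 / ε + ι) / lam₂)
    (x : ℝ → PiLp 2 fun _ : Fin N => PiLp 2 fun i => EuclideanSpace ℝ (Fin (d i)))
    (hx : ∀ t : ℝ, 0 ≤ t → HasDerivAt x (-(Amap J G κ (x t))) t) :
    ∃ α : ℝ, 0 < α ∧ ∀ t : ℝ, 0 ≤ t →
      ‖x t - (show PiLp 2 (fun _ : Fin N => PiLp 2 fun i => EuclideanSpace ℝ (Fin (d i))) from WithLp.toLp 2 fun _ => xstar)‖ ≤ Real.exp (-α * t) * ‖x 0 - (show PiLp 2 (fun _ : Fin N => PiLp 2 fun i => EuclideanSpace ℝ (Fin (d i))) from WithLp.toLp 2 fun _ => xstar)‖ := by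
  
  classical
  set ψt : Ysp N d := WithLp.toLp 2 fun _ => xstar with hψt
  obtain ⟨α, hα, hkey⟩ := key_ineq hN J G ε ι lam₂ κ hε hι hlam₂ hmono hFLip hFtilLip hlap
    xstar hxstar hκgain ψt rfl
  refine ⟨α, hα, ?_⟩
  -- Lyapunov function
  set f : ℝ → ℝ := fun t => Real.exp (2*α*t) * (inner ℝ (x t - ψt) (x t - ψt) : ℝ) with hf
  have hg : ∀ t : ℝ, 0 ≤ t → HasDerivAt (fun t => (inner ℝ (x t - ψt) (x t - ψt) : ℝ))
      ((inner ℝ (x t - ψt) (-(Amap J G κ (x t))) : ℝ)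
        + (inner ℝ (-(Amap J G κ (x t))) (x t - ψt) : ℝ)) t := by
    intro t ht
    exact ((hx t ht).sub_const ψt).inner ℝ ((hx t ht).sub_const ψt)
  have hexp : ∀ t : ℝ, HasDerivAt (fun t => Real.exp (2*α*t)) (2*α*Real.exp (2*α*t)) t := by
    intro t
    have h1 : HasDerivAt (fun t : ℝ => 2*α*t) (2*α) t := by
      simpa using (hasDerivAt_id t).const_mul (2*α)
    simpa [mul_comm] using h1.exp
  have hfd : ∀ t : ℝ, 0 ≤ t → HasDerivAt f
      (2*α*Real.exp (2*α*t) * (inner ℝ (x t - ψt) (x t - ψt) : ℝ)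
        + Real.exp (2*α*t) * ((inner ℝ (x t - ψt) (-(Amap J G κ (x t))) : ℝ)
          + (inner ℝ (-(Amap J G κ (x t))) (x t - ψt) : ℝ))) t := by
    intro t ht
    exact (hexp t).mul (hg t ht)
  have hfd_nonpos : ∀ t : ℝ, 0 ≤ t →
      (2*α*Real.exp (2*α*t) * (inner ℝ (x t - ψt) (x t - ψt) : ℝ)
        + Real.exp (2*α*t) * ((inner ℝ (x t - ψt) (-(Amap J G κ (x t))) : ℝ)
          + (inner ℝ (-(Amap J G κ (x t))) (x t - ψt) : ℝ))) ≤ 0 := by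
    intro t ht
    have h1 := hkey (x t)
    have h2 : (inner ℝ (x t - ψt) (x t - ψt) : ℝ) = ‖x t - ψt‖^2 :=
      real_inner_self_eq_norm_sq _
    have h3 : (inner ℝ (x t - ψt) (-(Amap J G κ (x t))) : ℝ)
        = -(inner ℝ (x t - ψt) (Amap J G κ (x t)) : ℝ) := inner_neg_right _ _
    have h4 : (inner ℝ (-(Amap J G κ (x t))) (x t - ψt) : ℝ)
        = (inner ℝ (x t - ψt) (-(Amap J G κ (x t))) : ℝ) := real_inner_comm _ _
    have he : 0 < Real.exp (2*α*t) := Real.exp_pos _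
    rw [h2, h3, h4, h3]
    have h5 : α * ‖x t - ψt‖^2 ≤ (inner ℝ (x t - ψt) (Amap J G κ (x t)) : ℝ) := h1
    nlinarith [he, h5]
  -- f is antitone on [0, ∞)
  have hanti : AntitoneOn f (Set.Ici (0:ℝ)) := by
    apply antitoneOn_of_deriv_nonpos (convex_Ici 0)
    · exact fun t ht => ((hfd t ht).continuousAt).continuousWithinAt
    · intro t ht
      rw [interior_Ici] at ht
      exact ((hfd t (le_of_lt ht)).differentiableAt).differentiableWithinAt
    · intro t ht
      rw [interior_Ici] at ht
      rw [(hfd t (le_of_lt ht)).deriv]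
      exact hfd_nonpos t (le_of_lt ht)
  intro t ht
  have hft : f t ≤ f 0 := hanti Set.self_mem_Ici ht ht
  have hf0 : f 0 = ‖x 0 - ψt‖^2 := by
    show Real.exp (2*α*0) * (inner ℝ (x 0 - ψt) (x 0 - ψt) : ℝ) = _
    rw [real_inner_self_eq_norm_sq, mul_zero, Real.exp_zero, one_mul]
  have hft' : Real.exp (2*α*t) * ‖x t - ψt‖^2 ≤ ‖x 0 - ψt‖^2 := by
    have : f t = Real.exp (2*α*t) * ‖x t - ψt‖^2 := by
      show Real.exp (2*α*t) * (inner ℝ (x t - ψt) (x t - ψt) : ℝ) = _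
      rw [real_inner_self_eq_norm_sq]
    rw [← this, ← hf0]; exact hft
  have hsq : ‖x t - ψt‖^2 ≤ (Real.exp (-α*t) * ‖x 0 - ψt‖)^2 := by
    have hepos : 0 < Real.exp (2*α*t) := Real.exp_pos _
    have hexp2 : (Real.exp (-α*t))^2 = (Real.exp (2*α*t))⁻¹ := by
      rw [← Real.exp_neg]
      rw [sq, ← Real.exp_add]
      ring_nf
    rw [mul_pow, hexp2]
    calc ‖x t - ψt‖^2 ≤ ‖x 0 - ψt‖^2 / Real.exp (2*α*t) := by
          rw [le_div_iff₀ hepos]; linarith [hft']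
      _ = (Real.exp (2*α*t))⁻¹ * ‖x 0 - ψt‖^2 := by ring
  exact sqrt_trick (by positivity) hsq (norm_nonneg _)
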